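/- Let N ≥ 0 be a fixed integer, T ⊆ X_i^* be computably enumerable, and g : T → X_2^* be a Gödel numbering. Then lim_{n→∞} i^{−n} · card{x ∈ T : |x|_i = n and δ_g(x) ≤ N} = 0. -/

import Mathlib

open scoped ENNReal

/-- Finite strings over an alphabet with `i` letters. -/
abbrev Str (i : ℕ) : Type := List (Fin i)

/-- A set of strings is prefix-free: no element is a proper prefix of another. -/
def PrefixFree {i : ℕ} (S : Set (Str i)) : Prop :=
  ∀ x ∈ S, ∀ y ∈ S, x <+: y → x = y

/-- A self-delimiting machine over the alphabet with `i` letters: a partial computable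
function on strings whose domain is prefix-free. -/
structure Machine (i : ℕ) where
  f : Str i →. Str i
  partrec : Partrec f
  prefixFree : PrefixFree f.Dom

/-- Program-size complexity of `x` relative to the machine `T`:
the least length of a program `y` with `T(y) = x` (with `min ∅ = ∞`). -/
noncomputable def Hc {i : ℕ} (T : Machine i) (x : Str i) : ℝ≥0∞ :=
  sInf {n : ℝ≥0∞ | ∃ y : Str i, (y.length : ℝ≥0∞) = n ∧ x ∈ T.f y}

/-- `U` is a universal machine: it minimizes program-size complexity up to an
additive constant among all machines. -/
def IsUniversal {i : ℕ} (U : Machine i) : Prop :=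
  ∀ T : Machine i, ∃ c : ℕ, ∀ x : Str i, Hc U x ≤ Hc T x + (c : ℝ≥0∞)

/-- A set of strings is computably enumerable if it is the domain of a
partial computable function. -/
def CEset {i : ℕ} (A : Set (Str i)) : Prop :=
  ∃ f : Str i →. Str i, Partrec f ∧ A = f.Dom

/-- A Gödel numbering for `L`: a computable function into binary strings,
injective on `L`. -/
def GoedelNumbering {i : ℕ} (L : Set (Str i)) (g : Str i → Str 2) : Prop :=
  Computable g ∧ Set.InjOn g L

/-- `δ_g(x) = H₂(g(x)) − ⌈log₂(i)·|x|ᵢ⌉`, as an extended real. -/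
noncomputable def deltaG {i : ℕ} (U2 : Machine 2) (g : Str i → Str 2) (x : Str i) : EReal :=
  (Hc U2 (g x) : EReal) - ((⌈Real.logb 2 i * (x.length : ℝ)⌉ : ℝ) : EReal)

/-- Kraft's inequality for finite prefix-free sets of binary strings. -/
lemma kraft_finset (S : Set (Str 2)) (hS : PrefixFree S) (F : Finset (Str 2))
    (hF : ↑F ⊆ S) : ∑ p ∈ F, ((2 : ℝ≥0∞)⁻¹) ^ p.length ≤ 1 := by
  classical
  set L := F.sup List.length with hL
  have hlen : ∀ p ∈ F, p.length ≤ L := fun p hp => Finset.le_sup hp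
  set E : Str 2 → Finset (Str 2) := fun p =>
    (Finset.univ : Finset (List.Vector (Fin 2) (L - p.length))).image
      (fun t => p ++ t.toList) with hE
  have hEcard : ∀ p, (E p).card = 2 ^ (L - p.length) := by
    intro p
    rw [hE]
    rw [Finset.card_image_of_injective _ (fun a b hab =>
      List.Vector.toList_injective (List.append_cancel_left hab))]
    simp [card_vector]
  have hEmem : ∀ p ∈ F, ∀ x ∈ E p, x.length = L ∧ p <+: x := by
    intro p hp x hx
    simp only [hE, Finset.mem_image, Finset.mem_univ, true_and] at hx
    obtain ⟨t, rfl⟩ := hx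
    constructor
    · simp [List.Vector.toList_length, Nat.add_sub_cancel' (hlen p hp)]
    · exact List.prefix_append _ _
  have hdisj : ∀ p ∈ F, ∀ q ∈ F, p ≠ q → Disjoint (E p) (E q) := by
    intro p hp q hq hpq
    rw [Finset.disjoint_left]
    intro x hxp hxq
    obtain ⟨_, hpx⟩ := hEmem p hp x hxp
    obtain ⟨_, hqx⟩ := hEmem q hq x hxq
    rcases le_total p.length q.length with h | h
    · exact hpq (hS p (hF hp) q (hF hq) (List.prefix_of_prefix_length_le hpx hqx h))
    · exact hpq ((hS q (hF hq) p (hF hp) (List.prefix_of_prefix_length_le hqx hpx h)).symm)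
  have key : ∑ p ∈ F, 2 ^ (L - p.length) ≤ 2 ^ L := by
    calc ∑ p ∈ F, 2 ^ (L - p.length) = ∑ p ∈ F, (E p).card :=
          Finset.sum_congr rfl fun p _ => (hEcard p).symm
      _ = (F.biUnion E).card := (Finset.card_biUnion hdisj).symm
      _ ≤ ((Finset.univ : Finset (List.Vector (Fin 2) L)).image
            List.Vector.toList).card := by
          apply Finset.card_le_card
          intro x hx
          obtain ⟨p, hp, hxp⟩ := Finset.mem_biUnion.1 hx
          obtain ⟨hxL, -⟩ := hEmem p hp x hxp
          exact Finset.mem_image.2 ⟨⟨x, hxL⟩, Finset.mem_univ _, rfl⟩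
      _ ≤ 2 ^ L := by
          calc ((Finset.univ : Finset (List.Vector (Fin 2) L)).image
                List.Vector.toList).card
              ≤ (Finset.univ : Finset (List.Vector (Fin 2) L)).card :=
                Finset.card_image_le
            _ = 2 ^ L := by simp [card_vector]
  have h2 : (2 : ℝ≥0∞) ≠ 0 := by norm_num
  have h2t : (2 : ℝ≥0∞) ≠ ⊤ := by norm_num
  have hpow : ∀ p ∈ F, ((2:ℝ≥0∞)⁻¹) ^ p.length * 2 ^ L = 2 ^ (L - p.length) := by
    intro p hp
    have : (2:ℝ≥0∞) ^ L = 2 ^ p.length * 2 ^ (L - p.length) := by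
      rw [← pow_add, Nat.add_sub_cancel' (hlen p hp)]
    rw [this, ← ENNReal.inv_pow, ← mul_assoc,
      ENNReal.inv_mul_cancel (pow_ne_zero _ h2) (ENNReal.pow_ne_top h2t), one_mul]
  have hmul : (∑ p ∈ F, ((2:ℝ≥0∞)⁻¹) ^ p.length) * 2 ^ L ≤ 1 * 2 ^ L := by
    rw [Finset.sum_mul, one_mul]
    calc ∑ p ∈ F, ((2:ℝ≥0∞)⁻¹) ^ p.length * 2 ^ L
        = ∑ p ∈ F, (2:ℝ≥0∞) ^ (L - p.length) := Finset.sum_congr rfl hpow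
      _ = ((∑ p ∈ F, 2 ^ (L - p.length) : ℕ) : ℝ≥0∞) := by push_cast; ring
      _ ≤ ((2 ^ L : ℕ) : ℝ≥0∞) := by exact_mod_cast Nat.cast_le.2 key
      _ = 2 ^ L := by push_cast; ring
  exact (ENNReal.mul_le_mul_iff_left (pow_ne_zero _ h2) (ENNReal.pow_ne_top h2t)).1 hmul

/-- If `δ_g(x) ≤ N`, there is a program of length at most `⌈log₂ i · |x|⌉ + N`
producing `g x`. -/
lemma exists_prog {i : ℕ} (hi : 2 ≤ i) (U2 : Machine 2) (g : Str i → Str 2) (N : ℕ)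
    (x : Str i) (hx : deltaG U2 g x ≤ (N : EReal)) :
    ∃ p : Str 2, g x ∈ U2.f p ∧
      p.length ≤ (⌈Real.logb 2 i * (x.length : ℝ)⌉).toNat + N := by
  have hi1 : (1 : ℝ) ≤ i := by exact_mod_cast le_trans one_le_two hi
  set r : ℤ := ⌈Real.logb 2 i * (x.length : ℝ)⌉ with hrdef
  have hr0 : 0 ≤ r :=
    Int.ceil_nonneg (mul_nonneg (Real.logb_nonneg one_lt_two hi1) (Nat.cast_nonneg _))
  set K : ℕ := r.toNat + N with hKdef
  have h1 : (Hc U2 (g x) : EReal) ≤ (N : EReal) + ((r : ℝ) : EReal) :=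
    (EReal.sub_le_iff_le_add (a := (Hc U2 (g x) : EReal))
      (b := ((r : ℝ) : EReal)) (c := (N : EReal))
      (Or.inl (EReal.coe_ne_bot _)) (Or.inl (EReal.coe_ne_top _))).1 hx
  have hKr : ((K : ℝ≥0∞) : EReal) = (N : EReal) + ((r : ℝ) : EReal) := by
    have h3 : ((r : ℝ) : EReal) = ((r.toNat : ℝ) : EReal) := by
      congr 1
      exact_mod_cast (Int.toNat_of_nonneg hr0).symm
    have e : ∀ m : ℕ, ((m : ℝ≥0∞) : EReal) = ((m : ℝ) : EReal) := fun m => by norm_cast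
    rw [h3, hKdef, e]
    have e2 : (N : EReal) = ((N : ℝ) : EReal) := by norm_cast
    rw [e2, ← EReal.coe_add]
    congr 1
    push_cast
    ring
  have h2 : Hc U2 (g x) ≤ (K : ℝ≥0∞) := by
    rw [← EReal.coe_ennreal_le_coe_ennreal_iff, hKr]
    exact h1
  have hlt : Hc U2 (g x) < ((K + 1 : ℕ) : ℝ≥0∞) := by
    refine lt_of_le_of_lt h2 ?_
    exact_mod_cast Nat.lt_succ_self K
  rw [Hc] at hlt
  obtain ⟨m, hm, hmlt⟩ := sInf_lt_iff.1 hlt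
  obtain ⟨y, hy1, hy2⟩ := hm
  refine ⟨y, hy2, ?_⟩
  have : (y.length : ℝ≥0∞) < ((K + 1 : ℕ) : ℝ≥0∞) := hy1 ▸ hmlt
  exact Nat.lt_succ_iff.1 (by exact_mod_cast this)

/-- The exponential bound `2^(⌈log₂ i · n⌉ + N) ≤ 2^(N+1) · iⁿ`. -/
lemma pow2K {i : ℕ} (hi : 2 ≤ i) (N n : ℕ) :
    (2 : ℝ) ^ ((⌈Real.logb 2 i * (n : ℝ)⌉).toNat + N) ≤ 2 ^ (N + 1) * (i : ℝ) ^ n := by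
  have hi1 : (1 : ℝ) ≤ i := by exact_mod_cast le_trans one_le_two hi
  have hi0 : (0 : ℝ) < i := lt_of_lt_of_le zero_lt_one hi1
  set r : ℤ := ⌈Real.logb 2 i * (n : ℝ)⌉ with hrdef
  have hr0 : 0 ≤ r :=
    Int.ceil_nonneg (mul_nonneg (Real.logb_nonneg one_lt_two hi1) (Nat.cast_nonneg _))
  have h1 : ((r.toNat : ℝ)) ≤ Real.logb 2 i * n + 1 := by
    have : ((r.toNat : ℝ)) = (r : ℝ) := by exact_mod_cast Int.toNat_of_nonneg hr0
    rw [this]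
    exact le_of_lt (Int.ceil_lt_add_one _)
  have key : (2 : ℝ) ^ (r.toNat) ≤ 2 * (i : ℝ) ^ n := by
    have e1 : (2 : ℝ) ^ (r.toNat) = (2 : ℝ) ^ ((r.toNat : ℝ)) :=
      (Real.rpow_natCast 2 _).symm
    rw [e1]
    calc (2 : ℝ) ^ ((r.toNat : ℝ))
        ≤ (2 : ℝ) ^ (Real.logb 2 i * n + 1) :=
          Real.rpow_le_rpow_of_exponent_le one_le_two h1
      _ = 2 * (i : ℝ) ^ n := by
          rw [Real.rpow_add two_pos, Real.rpow_one, Real.rpow_mul (by norm_num)]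
          rw [Real.rpow_logb two_pos (by norm_num) hi0, Real.rpow_natCast]
          ring
  calc (2 : ℝ) ^ (r.toNat + N) = 2 ^ (r.toNat) * 2 ^ N := pow_add 2 _ _
    _ ≤ (2 * (i : ℝ) ^ n) * 2 ^ N := by
        apply mul_le_mul_of_nonneg_right key (by positivity)
    _ = 2 ^ (N + 1) * (i : ℝ) ^ n := by ring

/-- For fixed `N ≥ 0`, a c.e. set `T` and a Gödel numbering `g` for `T`,
`lim_{n→∞} i^{−n}·card{x ∈ T : |x|ᵢ = n, δ_g(x) ≤ N} = 0`. -/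
theorem stmt_6 {i : ℕ} (hi : 2 ≤ i) (U2 : Machine 2) (hU2 : IsUniversal U2)
    (N : ℕ) (T : Set (Str i)) (hT : CEset T)
    (g : Str i → Str 2) (hg : GoedelNumbering T g) :
    Filter.Tendsto
      (fun n : ℕ =>
        (Set.ncard {x : Str i | x ∈ T ∧ x.length = n ∧ deltaG U2 g x ≤ (N : EReal)} : ℝ)
          / (i : ℝ) ^ n)
      Filter.atTop (nhds 0) := by
  classical
  set A : ℕ → Set (Str i) :=
    fun n => {x : Str i | x ∈ T ∧ x.length = n ∧ deltaG U2 g x ≤ (N : EReal)} with hA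
  set K : ℕ → ℕ := fun n => (⌈Real.logb 2 i * (n : ℝ)⌉).toNat + N with hK
  have hfin : ∀ n, (A n).Finite := fun n =>
    (List.finite_length_eq (Fin i) n).subset fun x hx => hx.2.1
  set P : Str i → Str 2 := fun x =>
    if h : deltaG U2 g x ≤ (N : EReal) then Classical.choose (exists_prog hi U2 g N x h)
    else [] with hP
  have hPmem : ∀ x, ∀ _ : deltaG U2 g x ≤ (N : EReal), g x ∈ U2.f (P x) := by
    intro x h
    rw [hP]; simp only [dif_pos h]
    exact (Classical.choose_spec (exists_prog hi U2 g N x h)).1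
  have hPlen : ∀ x, ∀ _ : deltaG U2 g x ≤ (N : EReal),
      (P x).length ≤ (⌈Real.logb 2 i * (x.length : ℝ)⌉).toNat + N := by
    intro x h
    rw [hP]; simp only [dif_pos h]
    exact (Classical.choose_spec (exists_prog hi U2 g N x h)).2
  have hPinj : ∀ x, x ∈ T → deltaG U2 g x ≤ (N : EReal) →
      ∀ y, y ∈ T → deltaG U2 g y ≤ (N : EReal) → P x = P y → x = y := by
    intro x hxT hx y hyT hy hPxy
    have h1 := hPmem x hx
    have h2 := hPmem y hy
    rw [hPxy] at h1
    exact hg.2 hxT hyT (Part.mem_unique h1 h2)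
  set u : ℕ → ℝ≥0∞ := fun n => ((A n).ncard : ℝ≥0∞) * ((2 : ℝ≥0∞)⁻¹) ^ (K n) with hu
  have husum : ∑' n, u n ≤ 1 := by
    rw [ENNReal.tsum_eq_iSup_sum]
    refine iSup_le fun s => ?_
    set Fn : ℕ → Finset (Str 2) := fun n => ((hfin n).toFinset).image P with hFn
    have hAmem : ∀ n x, x ∈ (hfin n).toFinset → x ∈ T ∧ x.length = n ∧
        deltaG U2 g x ≤ (N : EReal) := by
      intro n x hx
      rwa [Set.Finite.mem_toFinset] at hx
    have step1 : ∀ n, u n ≤ ∑ q ∈ Fn n, ((2 : ℝ≥0∞)⁻¹) ^ q.length := by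
      intro n
      rw [hFn]
      rw [Finset.sum_image (fun x hx y hy hxy =>
        hPinj x (hAmem n x hx).1 (hAmem n x hx).2.2 y (hAmem n y hy).1
          (hAmem n y hy).2.2 hxy)]
      have hcard : u n = ∑ _x ∈ (hfin n).toFinset, ((2 : ℝ≥0∞)⁻¹) ^ (K n) := by
        simp only [hu, Finset.sum_const, nsmul_eq_mul,
          Set.ncard_eq_toFinset_card _ (hfin n)]
      rw [hcard]
      refine Finset.sum_le_sum fun x hx => ?_
      refine pow_le_pow_right_of_le_one' (ENNReal.inv_le_one.2 one_le_two) ?_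
      have h := hPlen x (hAmem n x hx).2.2
      rwa [(hAmem n x hx).2.1] at h
    have hdisjFn : (↑s : Set ℕ).PairwiseDisjoint Fn := by
      intro a _ b _ hab
      simp only [Function.onFun]
      rw [Finset.disjoint_left]
      intro q hqa hqb
      rw [hFn] at hqa hqb
      obtain ⟨x, hx, rfl⟩ := Finset.mem_image.1 hqa
      obtain ⟨y, hy, hyx⟩ := Finset.mem_image.1 hqb
      have hxA := hAmem a x hx
      have hyA := hAmem b y hy
      have : y = x := hPinj y hyA.1 hyA.2.2 x hxA.1 hxA.2.2 hyx
      exact hab (by rw [← hxA.2.1, ← this, hyA.2.1])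
    calc ∑ n ∈ s, u n ≤ ∑ n ∈ s, ∑ q ∈ Fn n, ((2 : ℝ≥0∞)⁻¹) ^ q.length :=
          Finset.sum_le_sum fun n _ => step1 n
      _ = ∑ q ∈ s.biUnion Fn, ((2 : ℝ≥0∞)⁻¹) ^ q.length :=
          (Finset.sum_biUnion hdisjFn).symm
      _ ≤ 1 := by
          refine kraft_finset U2.f.Dom U2.prefixFree _ ?_
          intro q hq
          simp only [Finset.coe_biUnion, Set.mem_iUnion, Finset.mem_coe] at hq
          obtain ⟨n, -, hqn⟩ := hq
          rw [hFn] at hqn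
          obtain ⟨x, hx, rfl⟩ := Finset.mem_image.1 hqn
          exact Part.dom_iff_mem.2 ⟨g x, hPmem x (hAmem n x hx).2.2⟩
  have hne : ∑' n, u n ≠ ⊤ := (lt_of_le_of_lt husum ENNReal.one_lt_top).ne
  have h0 : Filter.Tendsto u Filter.atTop (nhds 0) :=
    ENNReal.tendsto_atTop_zero_of_tsum_ne_top hne
  have h0r : Filter.Tendsto (fun n => (u n).toReal) Filter.atTop (nhds 0) := by
    have := (ENNReal.tendsto_toReal (a := 0) (by simp)).comp h0
    simpa [Function.comp_def] using this
  have h0c : Filter.Tendsto (fun n => (2 : ℝ) ^ (N + 1) * (u n).toReal)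
      Filter.atTop (nhds 0) := by
    simpa using h0r.const_mul ((2 : ℝ) ^ (N + 1))
  refine squeeze_zero (fun n => by positivity) (fun n => ?_) h0c
  -- the pointwise bound
  have hun : (u n).toReal = ((A n).ncard : ℝ) * ((2 : ℝ)⁻¹) ^ (K n) := by
    rw [hu]
    simp [ENNReal.toReal_mul, ENNReal.toReal_pow, ENNReal.toReal_inv]
  rw [hun]
  have hiR : (0 : ℝ) < (i : ℝ) ^ n := by positivity
  have h2K : (2 : ℝ) ^ (K n) ≤ 2 ^ (N + 1) * (i : ℝ) ^ n := pow2K hi N n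
  have hinv : ((i : ℝ) ^ n)⁻¹ ≤ 2 ^ (N + 1) * ((2 : ℝ)⁻¹) ^ (K n) := by
    rw [inv_pow 2 (K n)]
    rw [inv_eq_one_div, mul_comm ((2:ℝ)^(N+1)) _, inv_eq_one_div, div_mul_eq_mul_div,
      one_mul, div_le_div_iff₀ hiR (by positivity)]
    linarith [h2K]
  calc ((A n).ncard : ℝ) / (i : ℝ) ^ n = ((A n).ncard : ℝ) * ((i : ℝ) ^ n)⁻¹ :=
        div_eq_mul_inv _ _
    _ ≤ ((A n).ncard : ℝ) * (2 ^ (N + 1) * ((2 : ℝ)⁻¹) ^ (K n)) :=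
        mul_le_mul_of_nonneg_left hinv (Nat.cast_nonneg _)
    _ = 2 ^ (N + 1) * (((A n).ncard : ℝ) * ((2 : ℝ)⁻¹) ^ (K n)) := by ring
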